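/- Let H be a real Hilbert space and let f, g : H → ℝ ∪ {+∞} be proper lower semicontinuous convex functions (f, g ∈ Γ₀(H)). Assume either that g is supercoercive, or that f is bounded from below and g is coercive. Then the infimal convolution is exact: for each x ∈ H there exists x* ∈ H such that (f □ g)(x) = f(x*) + g(x − x*). -/

import Mathlib

noncomputable section
open Filter Topology Pointwise

variable {H : Type*} [NormedAddCommGroup H] [InnerProductSpace ℝ H] [CompleteSpace H]

/-- An extended-real-valued function `f : H → ℝ ∪ {+∞}` (i.e. never `-∞`) is *proper*
if it is finite at at least one point. -/
def EProper (f : H → EReal) : Prop := (∀ x, f x ≠ ⊥) ∧ (∃ x, f x ≠ ⊤)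

/-- The infimal convolution `(f □ g)(x) = ⨅_{y} (f y + g (x - y))`. -/
def infConv (f g : H → EReal) (x : H) : EReal := ⨅ y : H, f y + g (x - y)

/-- The convex conjugate `f*(φ) = ⨆_{x} (⟨φ, x⟩ - f x)`. -/
def conj (f : H → EReal) (φ : H) : EReal := ⨆ x : H, ((inner ℝ φ x : ℝ) : EReal) - f x

/-- Convexity of an extended-real-valued function (extended-real arithmetic). -/
def EConvexOn (f : H → EReal) : Prop :=
  ∀ x y : H, ∀ t : ℝ, 0 < t → t < 1 →
    f (t • x + (1 - t) • y) ≤ (t : EReal) * f x + ((1 - t : ℝ) : EReal) * f y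

/-- Strict convexity: strict inequality whenever `x ≠ y` and both values are finite. -/
def EStrictConvexOn (f : H → EReal) : Prop :=
  ∀ x y : H, x ≠ y → f x ≠ ⊤ → f y ≠ ⊤ → ∀ t : ℝ, 0 < t → t < 1 →
    f (t • x + (1 - t) • y) < (t : EReal) * f x + ((1 - t : ℝ) : EReal) * f y

/-- `f` is coercive: `f x → +∞` as `‖x‖ → +∞`. -/
def ECoercive (f : H → EReal) : Prop :=
  ∀ M : ℝ, ∃ R : ℝ, ∀ x : H, R ≤ ‖x‖ → (M : EReal) ≤ f x

/-- `f` is supercoercive: `f x / ‖x‖ → +∞` as `‖x‖ → +∞`. -/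
def ESupercoercive (f : H → EReal) : Prop :=
  ∀ M : ℝ, ∃ R : ℝ, ∀ x : H, R ≤ ‖x‖ → ((M * ‖x‖ : ℝ) : EReal) ≤ f x

/-- The Moreau envelope `ᵉf(x) = ⨅_{y} (f y + ‖x - y‖² / (2ε))`. -/
def moreau (ε : ℝ) (f : H → EReal) (x : H) : EReal :=
  ⨅ y : H, f y + ((‖x - y‖ ^ 2 / (2 * ε) : ℝ) : EReal)

/-- `p` is a minimizer of `y ↦ f y + ‖x - y‖²/(2ε)`, i.e. a proximal point of `f` at `x`. -/
def IsProx (ε : ℝ) (f : H → EReal) (x p : H) : Prop :=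
  ∀ y : H, f p + ((‖x - p‖ ^ 2 / (2 * ε) : ℝ) : EReal)
    ≤ f y + ((‖x - y‖ ^ 2 / (2 * ε) : ℝ) : EReal)

/-- The subdifferential `∂f(p) = {φ : f p finite and ∀ y, f y ≥ f p + ⟨φ, y - p⟩}`. -/
def subdiff (f : H → EReal) (p : H) : Set H :=
  {φ : H | f p ≠ ⊤ ∧ ∀ y : H, f p + ((inner ℝ φ (y - p) : ℝ) : EReal) ≤ f y}


lemma ereal_add_ne_bot {a b : EReal} (ha : a ≠ ⊥) (hb : b ≠ ⊥) : a + b ≠ ⊥ := by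
  simp [EReal.add_eq_bot_iff, ha, hb]

lemma ereal_mul_ne_bot {t : ℝ} (ht : 0 < t) {a : EReal} (ha : a ≠ ⊥) : (t : EReal) * a ≠ ⊥ := by
  induction a using EReal.rec with
  | bot => exact absurd rfl ha
  | coe x => rw [← EReal.coe_mul]; exact EReal.coe_ne_bot _
  | top => rw [EReal.mul_top_of_pos (by exact_mod_cast ht)]; simp

lemma ereal_distrib {t : ℝ} (ht : 0 ≤ t) {a b : EReal} (ha : a ≠ ⊥) (hb : b ≠ ⊥) :
    (t : EReal) * (a + b) = (t : EReal) * a + (t : EReal) * b := by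
  rcases eq_or_lt_of_le ht with h0 | h0
  · simp [← h0]
  · have htE : (0 : EReal) < (t : EReal) := by exact_mod_cast h0
    induction a using EReal.rec with
    | bot => exact absurd rfl ha
    | top =>
      rw [EReal.top_add_of_ne_bot hb, EReal.mul_top_of_pos htE,
        EReal.top_add_of_ne_bot (ereal_mul_ne_bot h0 hb)]
    | coe x =>
      induction b using EReal.rec with
      | bot => exact absurd rfl hb
      | coe y => norm_cast; ring
      | top =>
        rw [EReal.add_top_of_ne_bot (EReal.coe_ne_bot x), EReal.mul_top_of_pos htE,
          ← EReal.coe_mul, EReal.add_top_of_ne_bot (EReal.coe_ne_bot _)]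

lemma exists_affine_minorant (f : H → EReal) (hf₀ : EProper f)
    (hf₁ : LowerSemicontinuous f) (hf₂ : EConvexOn f) :
    ∃ C c : ℝ, 0 ≤ C ∧ ∀ y : H, ((c - C * ‖y‖ : ℝ) : EReal) ≤ f y := by
  obtain ⟨hbot, x₀, hx₀⟩ := hf₀
  set r₀ : ℝ := (f x₀).toReal with hr₀
  have hfx₀ : ((r₀ : ℝ) : EReal) = f x₀ := EReal.coe_toReal hx₀ (hbot x₀)
  set E : Set (H × ℝ) := {p : H × ℝ | f p.1 ≤ ((p.2 : ℝ) : EReal)} with hE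
  have hEclosed : IsClosed E := by
    have : E = (fun p : H × ℝ => ((p.1, ((p.2 : ℝ) : EReal)) : H × EReal)) ⁻¹'
        {p : H × EReal | f p.1 ≤ p.2} := rfl
    rw [this]
    exact IsClosed.preimage
      (continuous_fst.prodMk (continuous_coe_real_ereal.comp continuous_snd))
      hf₁.isClosed_epigraph
  have hEconv : Convex ℝ E := by
    intro p hp q hq a b ha hb hab
    rcases eq_or_lt_of_le ha with h0 | h0
    · have : b = 1 := by linarith
      simp only [← h0, this, zero_smul, one_smul, zero_add]
      exact hq
    · rcases eq_or_lt_of_le hb with h1 | h1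
      · have : a = 1 := by linarith
        simp only [← h1, this, zero_smul, one_smul, add_zero]
        exact hp
      · have hb' : b = 1 - a := by linarith
        have ha1 : a < 1 := by linarith
        have key := hf₂ p.1 q.1 a h0 ha1
        have h1' : (a : EReal) * f p.1 ≤ (a : EReal) * ((p.2 : ℝ) : EReal) :=
          mul_le_mul_of_nonneg_left hp (by exact_mod_cast ha)
        have h2' : ((1 - a : ℝ) : EReal) * f q.1 ≤ ((1 - a : ℝ) : EReal) * ((q.2 : ℝ) : EReal) :=
          mul_le_mul_of_nonneg_left hq (by exact_mod_cast (by linarith : (0:ℝ) ≤ 1 - a))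
        have : f (a • p.1 + (1 - a) • q.1) ≤
            (a : EReal) * ((p.2 : ℝ) : EReal) + ((1 - a : ℝ) : EReal) * ((q.2 : ℝ) : EReal) :=
          key.trans (add_le_add h1' h2')
        have hmem : (a • p + b • q).1 = a • p.1 + (1 - a) • q.1 := by
          simp [hb']
        show f ((a • p + b • q).1) ≤ (((a • p + b • q).2 : ℝ) : EReal)
        rw [hmem]
        refine this.trans (le_of_eq ?_)
        have : (a • p + b • q).2 = a * p.2 + (1 - a) * q.2 := by
          simp [hb', smul_eq_mul]
        rw [this]
        norm_cast
  have hpt : ((x₀, r₀ - 1) : H × ℝ) ∉ E := by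
    simp only [hE, Set.mem_setOf_eq, ← hfx₀]
    push_cast
    simp only [not_le]
    exact_mod_cast (by linarith : r₀ - 1 < r₀)
  obtain ⟨ℓ, u, hEu, hupt⟩ := geometric_hahn_banach_closed_point hEconv hEclosed hpt
  set a : ℝ := ℓ (0, 1) with haa
  have hkey : ∀ (y : H) (t : ℝ), ℓ (y, t) = ℓ (y, 0) + t * a := by
    intro y t
    have : ((y, t) : H × ℝ) = (y, 0) + t • ((0 : H), (1 : ℝ)) := by
      simp
    rw [this, map_add, map_smul, smul_eq_mul]
  have hx₀E : ((x₀, r₀) : H × ℝ) ∈ E := le_of_eq hfx₀.symm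
  have ha0 : a < 0 := by
    have h1 := hEu _ hx₀E
    rw [hkey] at h1 hupt
    nlinarith
  set α : ℝ := -a with hα
  have hαpos : 0 < α := by simp [hα]; linarith
  refine ⟨‖ℓ‖ / α, -u / α, by positivity, fun y => ?_⟩
  by_cases hytop : f y = ⊤
  · rw [hytop]; exact le_top
  · set s : ℝ := (f y).toReal with hs
    have hfy : ((s : ℝ) : EReal) = f y := EReal.coe_toReal hytop (hbot y)
    have hyE : ((y, s) : H × ℝ) ∈ E := le_of_eq hfy.symm
    have h1 := hEu _ hyE
    rw [hkey] at h1
    have hAy : -(‖ℓ‖ * ‖y‖) ≤ ℓ (y, 0) := by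
      have h2 : ‖ℓ (y, 0)‖ ≤ ‖ℓ‖ * ‖(y, (0:ℝ))‖ := ℓ.le_opNorm _
      have h3 : ‖((y, (0:ℝ)) : H × ℝ)‖ = ‖y‖ := by
        simp [Prod.norm_def]
      rw [h3, Real.norm_eq_abs] at h2
      have := abs_le.1 h2
      linarith [this.1]
    rw [← hfy]
    apply EReal.coe_le_coe_iff.2
    have hℓy : 0 ≤ ‖ℓ‖ * ‖y‖ := by positivity
    have hsa : s * α = -(s * a) := by rw [hα]; ring
    have hmain : -u - ‖ℓ‖ * ‖y‖ ≤ s * α := by rw [hsa]; linarith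
    have : -u / α - ‖ℓ‖ / α * ‖y‖ = (-u - ‖ℓ‖ * ‖y‖) / α := by ring
    rw [this, div_le_iff₀ hαpos]
    linarith

lemma exists_min (h : H → EReal) (hlsc : LowerSemicontinuous h) (hconv : EConvexOn h)
    (hne : ∃ y, h y ≠ ⊤)
    (hbdd : ∃ m : ℝ, ∀ y, (m : EReal) ≤ h y)
    (hcoer : ∀ r : ℝ, ∃ R : ℝ, ∀ y : H, R ≤ ‖y‖ → (r : EReal) < h y) :
    ∃ p : H, ∀ y : H, h p ≤ h y := by
  obtain ⟨m, hm⟩ := hbdd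
  obtain ⟨y₀, hy₀⟩ := hne
  set μ : EReal := ⨅ y, h y with hμdef
  have hμ_le : ∀ y, μ ≤ h y := fun y => iInf_le _ y
  have hμ_top : μ ≠ ⊤ := by
    intro hc
    exact hy₀ (top_le_iff.1 (hc ▸ hμ_le y₀))
  have hμ_bot : μ ≠ ⊥ := by
    intro hc
    have : (m : EReal) ≤ μ := le_iInf hm
    rw [hc] at this
    exact (EReal.coe_ne_bot m) (le_bot_iff.1 this)
  set μr : ℝ := μ.toReal with hμr
  have hμcoe : ((μr : ℝ) : EReal) = μ := EReal.coe_toReal hμ_top hμ_bot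
  -- the sublevel sets
  set C : ℕ → Set H := fun n => {y | h y ≤ ((μr + 1 / (n + 1) : ℝ) : EReal)} with hC
  have hCne : ∀ n, (C n).Nonempty := by
    intro n
    have hlt : μ < ((μr + 1 / (n + 1) : ℝ) : EReal) := by
      rw [← hμcoe]
      apply EReal.coe_lt_coe_iff.2
      have : (0:ℝ) < 1 / ((n : ℝ) + 1) := by positivity
      linarith
    obtain ⟨y, hy⟩ := iInf_lt_iff.1 (hμdef ▸ hlt : (⨅ y, h y) < _)
    exact ⟨y, le_of_lt hy⟩
  have hCclosed : ∀ n, IsClosed (C n) := fun n => hlsc.isClosed_preimage _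
  have hCconv : ∀ n, Convex ℝ (C n) := by
    intro n
    intro p hp q hq a b ha hb hab
    rcases eq_or_lt_of_le ha with h0 | h0
    · have : b = 1 := by linarith
      simpa [← h0, this] using hq
    · rcases eq_or_lt_of_le hb with h1 | h1
      · have : a = 1 := by linarith
        simpa [← h1, this] using hp
      · have hb' : b = 1 - a := by linarith
        have ha1 : a < 1 := by linarith
        have key := hconv p q a h0 ha1
        have h1' : (a : EReal) * h p ≤ (a : EReal) * ((μr + 1 / (n + 1) : ℝ) : EReal) :=
          mul_le_mul_of_nonneg_left hp (by exact_mod_cast ha)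
        have h2' : ((1 - a : ℝ) : EReal) * h q ≤
            ((1 - a : ℝ) : EReal) * ((μr + 1 / (n + 1) : ℝ) : EReal) :=
          mul_le_mul_of_nonneg_left hq (by exact_mod_cast (by linarith : (0:ℝ) ≤ 1 - a))
        show h (a • p + b • q) ≤ _
        rw [hb']
        refine key.trans ((add_le_add h1' h2').trans (le_of_eq ?_))
        norm_cast
        ring
  -- uniform bound on the sublevel sets
  obtain ⟨R₀, hR₀⟩ := hcoer (μr + 1)
  have hCbdd : ∀ n, ∀ y ∈ C n, ‖y‖ < R₀ := by
    intro n y hy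
    by_contra hc
    push_neg at hc
    have h1 := hR₀ y hc
    have h2 : h y ≤ ((μr + 1 / (n + 1) : ℝ) : EReal) := hy
    have h3 : ((μr + 1 / (n + 1) : ℝ) : EReal) ≤ ((μr + 1 : ℝ) : EReal) := by
      apply EReal.coe_le_coe_iff.2
      have : 1 / ((n : ℝ) + 1) ≤ 1 := by
        rw [div_le_one (by positivity)]
        simp
      linarith
    exact absurd (h1.trans_le (h2.trans h3)) (lt_irrefl _)
  have hCanti : ∀ {n m : ℕ}, n ≤ m → C m ⊆ C n := by
    intro n m hnm y hy
    refine le_trans hy (EReal.coe_le_coe_iff.2 ?_)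
    have : 1 / ((m : ℝ) + 1) ≤ 1 / ((n : ℝ) + 1) := by
      apply one_div_le_one_div_of_le (by positivity)
      exact_mod_cast Nat.succ_le_succ hnm
    linarith
  -- projections of 0 onto the sublevel sets
  have hq : ∀ n, ∃ v ∈ C n, ‖(0 : H) - v‖ = ⨅ w : C n, ‖(0 : H) - w‖ := fun n =>
    exists_norm_eq_iInf_of_complete_convex (hCne n) (hCclosed n).isComplete (hCconv n) 0
  choose q hqC hqd using hq
  haveI : ∀ n, Nonempty (C n) := fun n => (hCne n).to_subtype
  set d : ℕ → ℝ := fun n => ⨅ w : C n, ‖(0 : H) - w‖ with hd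
  have hdnorm : ∀ n, ‖q n‖ = d n := by
    intro n
    have := hqd n
    rw [zero_sub, norm_neg] at this
    exact this
  have hbddBelow : ∀ n, BddBelow (Set.range fun w : C n => ‖(0 : H) - w‖) := by
    intro n
    refine ⟨0, ?_⟩
    rintro x ⟨w, rfl⟩
    positivity
  have hdle : ∀ n, ∀ w ∈ C n, d n ≤ ‖w‖ := by
    intro n w hw
    have := ciInf_le (hbddBelow n) (⟨w, hw⟩ : C n)
    rw [zero_sub, norm_neg] at this
    exact this
  have hd0 : ∀ n, 0 ≤ d n := fun n => (hdnorm n) ▸ norm_nonneg _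
  have hdmono : Monotone d := by
    intro n m hnm
    rw [← hdnorm m]
    exact hdle n _ (hCanti hnm (hqC m))
  have hdbdd : BddAbove (Set.range d) := by
    refine ⟨R₀, ?_⟩
    rintro x ⟨n, rfl⟩
    exact le_of_lt ((hdnorm n) ▸ hCbdd n _ (hqC n))
  set D : ℝ := ⨆ n, d n with hD
  have hdD : ∀ n, d n ≤ D := fun n => le_ciSup hdbdd n
  have hdtendsto : Tendsto d atTop (𝓝 D) := tendsto_atTop_ciSup hdmono hdbdd
  -- Cauchy sequence
  set b : ℕ → ℝ := fun N => 2 * Real.sqrt (D ^ 2 - d N ^ 2) with hb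
  have hkey : ∀ N n m : ℕ, N ≤ n → N ≤ m → dist (q n) (q m) ≤ b N := by
    intro N n m hn hm
    have hqnC : q n ∈ C N := hCanti hn (hqC n)
    have hqmC : q m ∈ C N := hCanti hm (hqC m)
    have hmid : (2⁻¹ : ℝ) • q n + (2⁻¹ : ℝ) • q m ∈ C N :=
      hCconv N hqnC hqmC (by norm_num) (by norm_num) (by norm_num)
    have hmid2 : (2⁻¹ : ℝ) • q n + (2⁻¹ : ℝ) • q m = (2⁻¹ : ℝ) • (q n + q m) := by
      rw [smul_add]
    have hnormmid : ‖(2⁻¹ : ℝ) • (q n + q m)‖ = 2⁻¹ * ‖q n + q m‖ := by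
      rw [norm_smul]
      norm_num
    have h2d : 2 * d N ≤ ‖q n + q m‖ := by
      have := hdle N _ hmid
      rw [hmid2, hnormmid] at this
      linarith
    have hpar := parallelogram_law_with_norm ℝ (q n) (q m)
    have hsq : ‖q n - q m‖ ^ 2 ≤ 4 * (D ^ 2 - d N ^ 2) := by
      have h1 : ‖q n‖ = d n := hdnorm n
      have h2 : ‖q m‖ = d m := hdnorm m
      have hdn : d n ^ 2 ≤ D ^ 2 := pow_le_pow_left₀ (hd0 n) (hdD n) 2
      have hdm : d m ^ 2 ≤ D ^ 2 := pow_le_pow_left₀ (hd0 m) (hdD m) 2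
      have hmid' : (2 * d N) ^ 2 ≤ ‖q n + q m‖ ^ 2 :=
        pow_le_pow_left₀ (by linarith [hd0 N]) h2d 2
      have hpar' : ‖q n + q m‖ ^ 2 + ‖q n - q m‖ ^ 2 = 2 * (‖q n‖ ^ 2 + ‖q m‖ ^ 2) := by
        simpa [pow_two] using hpar
      rw [h1, h2] at hpar'
      nlinarith [hmid', hdn, hdm]
    have hDN : 0 ≤ D ^ 2 - d N ^ 2 := by
      have := pow_le_pow_left₀ (hd0 N) (hdD N) 2
      linarith
    rw [dist_eq_norm]
    have : ‖q n - q m‖ = Real.sqrt (‖q n - q m‖ ^ 2) := (Real.sqrt_sq (norm_nonneg _)).symm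
    rw [this, hb]
    calc Real.sqrt (‖q n - q m‖ ^ 2) ≤ Real.sqrt (4 * (D ^ 2 - d N ^ 2)) :=
          Real.sqrt_le_sqrt hsq
      _ = 2 * Real.sqrt (D ^ 2 - d N ^ 2) := by
          rw [show (4 : ℝ) * (D ^ 2 - d N ^ 2) = 2 ^ 2 * (D ^ 2 - d N ^ 2) by norm_num,
            Real.sqrt_mul (by positivity), Real.sqrt_sq (by norm_num)]
  have hbtendsto : Tendsto b atTop (𝓝 0) := by
    have h1 : Tendsto (fun N => D ^ 2 - d N ^ 2) atTop (𝓝 (D ^ 2 - D ^ 2)) :=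
      tendsto_const_nhds.sub (hdtendsto.pow 2)
    rw [sub_self] at h1
    have h2 : Tendsto (fun N => Real.sqrt (D ^ 2 - d N ^ 2)) atTop (𝓝 (Real.sqrt 0)) :=
      (Real.continuous_sqrt.continuousAt.tendsto).comp h1
    rw [Real.sqrt_zero] at h2
    have := h2.const_mul 2
    simpa using this
  have hcauchy : CauchySeq q := cauchySeq_of_le_tendsto_0 b (fun n m N hn hm => hkey N n m hn hm) hbtendsto
  obtain ⟨p, hp⟩ := cauchySeq_tendsto_of_complete hcauchy
  have hpC : ∀ N, p ∈ C N := by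
    intro N
    refine (hCclosed N).mem_of_tendsto hp ?_
    filter_upwards [eventually_ge_atTop N] with n hn
    exact hCanti hn (hqC n)
  have hpμ : h p ≤ μ := by
    by_contra hc
    push_neg at hc
    obtain ⟨c, hc1, hc2⟩ := EReal.exists_between_coe_real hc
    have hcr : μr < c := by
      rw [← hμcoe] at hc1
      exact_mod_cast hc1
    obtain ⟨n, hn⟩ := exists_nat_one_div_lt (sub_pos.2 hcr)
    have h1 : h p ≤ ((μr + 1 / (n + 1) : ℝ) : EReal) := hpC n
    have h2 : ((μr + 1 / (n + 1) : ℝ) : EReal) < (c : EReal) := by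
      apply EReal.coe_lt_coe_iff.2
      push_cast at hn ⊢
      linarith
    exact absurd ((h1.trans_lt h2).trans hc2) (lt_irrefl _)
  exact ⟨p, fun y => hpμ.trans (hμ_le y)⟩

theorem infConv_exact (f g : H → EReal)
    (hf₀ : EProper f) (hf₁ : LowerSemicontinuous f) (hf₂ : EConvexOn f) (hg₀ : EProper g) (hg₁ : LowerSemicontinuous g) (hg₂ : EConvexOn g)
    (hcoer : ESupercoercive g ∨ ((∃ m : ℝ, ∀ x, (m : EReal) ≤ f x) ∧ ECoercive g)) :
    ∀ x : H, ∃ xs : H, infConv f g x = f xs + g (x - xs) := by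
  intro x
  by_cases hall : ∀ y : H, f y + g (x - y) = ⊤
  · refine ⟨0, ?_⟩
    rw [hall 0, infConv]
    simp [hall]
  · push_neg at hall
    set h : H → EReal := fun y => f y + g (x - y) with hh
    -- basic properties of h
    have hhbot : ∀ y, h y ≠ ⊥ := fun y => ereal_add_ne_bot (hf₀.1 y) (hg₀.1 _)
    have hlsc : LowerSemicontinuous h := by
      apply LowerSemicontinuous.add' hf₁
        (LowerSemicontinuous.comp hg₁ (continuous_const.sub continuous_id))
      intro y
      exact EReal.continuousAt_add (Or.inr (hg₀.1 _)) (Or.inl (hf₀.1 y))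
    have hconv : EConvexOn h := by
      intro y z t ht ht1
      have h1 := hf₂ y z t ht ht1
      have h2 := hg₂ (x - y) (x - z) t ht ht1
      have hxz : t • (x - y) + (1 - t) • (x - z) = x - (t • y + (1 - t) • z) := by
        have hx : t • x + (1 - t) • x = x := by
          rw [← add_smul]
          simp
        rw [smul_sub, smul_sub]
        nth_rewrite 3 [← hx]
        abel
      rw [hxz] at h2
      calc h (t • y + (1 - t) • z)
          ≤ ((t : EReal) * f y + ((1 - t : ℝ) : EReal) * f z) +
            ((t : EReal) * g (x - y) + ((1 - t : ℝ) : EReal) * g (x - z)) :=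
            add_le_add h1 h2
        _ = (t : EReal) * h y + ((1 - t : ℝ) : EReal) * h z := by
            rw [ereal_distrib (le_of_lt ht) (hf₀.1 y) (hg₀.1 (x - y)),
              ereal_distrib (by linarith : (0:ℝ) ≤ 1 - t) (hf₀.1 z) (hg₀.1 (x - z)),
              add_add_add_comm]
    -- affine minorants
    obtain ⟨Cf, cf, hCf, hfmin⟩ := exists_affine_minorant f hf₀ hf₁ hf₂
    obtain ⟨Cg, cg, hCg, hgmin⟩ := exists_affine_minorant g hg₀ hg₁ hg₂
    have hnormxy : ∀ y : H, ‖y‖ - ‖x‖ ≤ ‖x - y‖ := by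
      intro y
      rw [norm_sub_rev]
      exact (norm_sub_norm_le y x).trans (le_refl _)
    -- coercivity of h
    have hcoer2 : ∀ r : ℝ, ∃ R : ℝ, ∀ y : H, R ≤ ‖y‖ → (r : EReal) < h y := by
      intro r
      rcases hcoer with hsc | ⟨⟨m, hm⟩, hco⟩
      · obtain ⟨R, hR⟩ := hsc (Cf + 1)
        refine ⟨max (R + ‖x‖) (r + 1 - cf + (Cf + 1) * ‖x‖), fun y hy => ?_⟩
        have hy1 : R + ‖x‖ ≤ ‖y‖ := le_trans (le_max_left _ _) hy
        have hy2 : r + 1 - cf + (Cf + 1) * ‖x‖ ≤ ‖y‖ := le_trans (le_max_right _ _) hy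
        have hxy : R ≤ ‖x - y‖ := by linarith [hnormxy y]
        have hgb := hR (x - y) hxy
        have hfb := hfmin y
        have hsum : ((cf - Cf * ‖y‖ : ℝ) : EReal) + (((Cf + 1) * ‖x - y‖ : ℝ) : EReal)
            ≤ h y := add_le_add hfb hgb
        rw [← EReal.coe_add] at hsum
        refine lt_of_lt_of_le (EReal.coe_lt_coe_iff.2 ?_) hsum
        have hmul : (Cf + 1) * (‖y‖ - ‖x‖) ≤ (Cf + 1) * ‖x - y‖ :=
          mul_le_mul_of_nonneg_left (hnormxy y) (by linarith)
        nlinarith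
      · obtain ⟨R, hR⟩ := hco (r + 1 - m)
        refine ⟨R + ‖x‖, fun y hy => ?_⟩
        have hxy : R ≤ ‖x - y‖ := by linarith [hnormxy y]
        have hsum : ((m : ℝ) : EReal) + ((r + 1 - m : ℝ) : EReal) ≤ h y :=
          add_le_add (hm y) (hR (x - y) hxy)
        rw [← EReal.coe_add] at hsum
        refine lt_of_lt_of_le (EReal.coe_lt_coe_iff.2 (by linarith)) hsum
    -- boundedness below of h
    have hbdd : ∃ mh : ℝ, ∀ y, (mh : EReal) ≤ h y := by
      obtain ⟨R0, hR0⟩ := hcoer2 0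
      set R1 : ℝ := max R0 0 with hR1
      refine ⟨min 0 (cf + cg - Cf * R1 - Cg * (‖x‖ + R1)), fun y => ?_⟩
      by_cases hy : R0 ≤ ‖y‖
      · refine le_trans (EReal.coe_le_coe_iff.2 (min_le_left _ _)) (le_of_lt ?_)
        exact_mod_cast hR0 y hy
      · push_neg at hy
        have hyR1 : ‖y‖ ≤ R1 := le_trans (le_of_lt hy) (le_max_left _ _)
        have hfb := hfmin y
        have hgb := hgmin (x - y)
        have hsum : ((cf - Cf * ‖y‖ : ℝ) : EReal) + ((cg - Cg * ‖x - y‖ : ℝ) : EReal)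
            ≤ h y := add_le_add hfb hgb
        rw [← EReal.coe_add] at hsum
        refine le_trans (EReal.coe_le_coe_iff.2 ?_) hsum
        have h1 : Cf * ‖y‖ ≤ Cf * R1 := mul_le_mul_of_nonneg_left hyR1 hCf
        have h2 : ‖x - y‖ ≤ ‖x‖ + R1 := le_trans (norm_sub_le x y) (by linarith)
        have h3 : Cg * ‖x - y‖ ≤ Cg * (‖x‖ + R1) := mul_le_mul_of_nonneg_left h2 hCg
        have := min_le_right (0:ℝ) (cf + cg - Cf * R1 - Cg * (‖x‖ + R1))
        linarith
    obtain ⟨p, hp⟩ := exists_min h hlsc hconv hall hbdd hcoer2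
    refine ⟨p, le_antisymm (iInf_le _ p) (le_iInf hp)⟩
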